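/- arXiv:2410.16809 — 3 statements merged into one kernel-verified Lean document; each statement's English description precedes it below -/
import Mathlib

section
/- Let (A_i)_{i ∈ I} be a family of commutative rings and set A := ∏_{i ∈ I} A_i. Let M be a finitely presented A-module. Then the natural map M → ∏_{i ∈ I} (M ⊗_A A_i) is an isomorphism of A-modules. -/
open TensorProduct

section Aux

variable {I : Type} (A : I → Type) [∀ i, CommRing (A i)]

@[reducible] private def stmt5Alg (i : I) : Algebra ((j : I) → A j) (A i) :=
  (Pi.evalRingHom A i).toAlgebra

attribute [local instance] stmt5Alg

/-- The natural map `M → ∏ i, A i ⊗ M`. -/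
private noncomputable def eta (M : Type) [AddCommGroup M] [Module ((i : I) → A i) M] :
    M →ₗ[(i : I) → A i] ((i : I) → (A i ⊗[(j : I) → A j] M)) :=
  LinearMap.pi (fun i => (TensorProduct.mk ((j : I) → A j) (A i) M) 1)

variable {M N : Type} [AddCommGroup M] [Module ((i : I) → A i) M]
  [AddCommGroup N] [Module ((i : I) → A i) N]

private lemma eta_natural (g : M →ₗ[(i : I) → A i] N) :
    (LinearMap.pi (fun i => (LinearMap.lTensor (A i) g).comp (LinearMap.proj i))).comp
        (eta A M) = (eta A N).comp g := by
  ext m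
  simp [eta]
  rfl

/-- transfer along a linear equivalence -/
private lemma eta_bij_of_equiv (e : M ≃ₗ[(i : I) → A i] N)
    (h : Function.Bijective (eta A M)) : Function.Bijective (eta A N) := by
  have hnat := eta_natural A (e : M →ₗ[(i : I) → A i] N)
  have hF : Function.Bijective
      (LinearMap.pi (fun i => (LinearMap.lTensor (A i) (e : M →ₗ[(i : I) → A i] N)).comp
        (LinearMap.proj i)) :
        ((i : I) → (A i ⊗[(j : I) → A j] M)) →ₗ[(i : I) → A i]
        ((i : I) → (A i ⊗[(j : I) → A j] N))) := by
    constructor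
    · intro x y hxy
      funext i
      have := congrFun hxy i
      simp only [LinearMap.pi_apply, LinearMap.coe_comp, Function.comp_apply,
        LinearMap.proj_apply] at this ⊢
      exact (LinearEquiv.lTensor (A i) e).injective this
    · intro y
      refine ⟨fun i => (LinearEquiv.lTensor (A i) e).symm (y i), funext fun i => ?_⟩
      simp only [LinearMap.pi_apply, LinearMap.coe_comp, Function.comp_apply,
        LinearMap.proj_apply]
      exact (LinearEquiv.lTensor (A i) e).apply_symm_apply (y i)
  have : ⇑(eta A N) = ⇑(LinearMap.pi (fun i => (LinearMap.lTensor (A i)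
      (e : M →ₗ[(i : I) → A i] N)).comp (LinearMap.proj i))) ∘
      (⇑(eta A M) ∘ ⇑(e.symm : N →ₗ[(i : I) → A i] M)) := by
    funext x i
    show (1 : A i) ⊗ₜ[(j : I) → A j] x = LinearMap.lTensor (A i) (e : M →ₗ[(j : I) → A j] N)
      ((1 : A i) ⊗ₜ[(j : I) → A j] (e.symm x))
    simp
  rw [this]
  exact hF.comp (h.comp e.symm.bijective)

/-- the free case -/
private lemma eta_bij_pi (ι : Type) [Fintype ι] [DecidableEq ι] :
    Function.Bijective (eta A (ι → ((i : I) → A i))) := by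
  set R := (i : I) → A i
  -- the componentwise equivalence A i ⊗ (ι → R) ≃ (ι → A i)
  let c : ((i : I) → (A i ⊗[R] (ι → R))) ≃ ((i : I) → (ι → A i)) :=
    Equiv.piCongrRight fun i => (TensorProduct.piScalarRight R (A i) (A i) ι).toEquiv
  let sw : ((i : I) → (ι → A i)) ≃ (ι → R) := Equiv.piComm (fun _ _ => _)
  have key : ∀ f : ι → R, sw (c (eta A (ι → R) f)) = f := by
    intro f
    funext j i
    simp only [sw, c, eta, Equiv.piComm, Equiv.piCongrRight, LinearMap.pi_apply,
      Equiv.coe_fn_mk, Function.swap, LinearEquiv.coe_toEquiv, TensorProduct.mk_apply,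
      TensorProduct.piScalarRight_apply, TensorProduct.piScalarRightHom_tmul]
    show f j • (1 : A i) = f j i
    rw [Algebra.smul_def, mul_one]
    rfl
  have : Function.LeftInverse (sw ∘ c) (eta A (ι → R)) := key
  constructor
  · exact this.injective
  · intro y
    refine ⟨sw (c y), ?_⟩
    have := key (sw (c y))
    apply (c.trans sw).injective
    exact this
end Aux

section Main
variable {I : Type} (A : I → Type) [∀ i, CommRing (A i)]
attribute [local instance] stmt5Alg

private lemma eta_bij (M : Type) [AddCommGroup M] [Module ((i : I) → A i) M]
    [fp : Module.FinitePresentation ((i : I) → A i) M] :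
    Function.Bijective (eta A M) := by
  classical
  set R := (i : I) → A i with hR
  obtain ⟨s, hspan, hker⟩ := fp
  let l : (s →₀ R) →ₗ[R] M := Finsupp.linearCombination R ((↑) : s → M)
  have hl : Function.Surjective l := by
    rw [← LinearMap.range_eq_top, Finsupp.range_linearCombination]
    simpa only [Subtype.range_coe_subtype, Finset.setOf_mem] using hspan
  obtain ⟨t, ht⟩ := hker
  let f : (t →₀ R) →ₗ[R] (s →₀ R) := Finsupp.linearCombination R ((↑) : t → (s →₀ R))
  have hrange : LinearMap.range f = LinearMap.ker l := by
    rw [Finsupp.range_linearCombination]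
    rw [← ht]
    congr 1
    simp [Subtype.range_coe_subtype, Finset.setOf_mem]
  have hexact : Function.Exact f l := LinearMap.exact_iff.mpr hrange.symm
  have hQ : Function.Bijective (eta A (s →₀ R)) :=
    eta_bij_of_equiv A (Finsupp.linearEquivFunOnFinite R R s).symm (eta_bij_pi A s)
  have hP : Function.Bijective (eta A (t →₀ R)) :=
    eta_bij_of_equiv A (Finsupp.linearEquivFunOnFinite R R t).symm (eta_bij_pi A t)
  have hnatl := eta_natural A l
  have hnatf := eta_natural A f
  constructor
  · -- injectivity
    rw [injective_iff_map_eq_zero]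
    intro m hm
    obtain ⟨q, rfl⟩ := hl m
    have h1 : ∀ i, LinearMap.lTensor (A i) l (eta A (s →₀ R) q i) = 0 := by
      intro i
      have := congrFun (congrArg (fun g => g q) hnatl) i
      change LinearMap.lTensor (A i) l (eta A (s →₀ R) q i) = eta A M (l q) i at this
      rw [this, hm]
      rfl
    have h2 : ∀ i, ∃ u : A i ⊗[R] (t →₀ R),
        LinearMap.lTensor (A i) f u = eta A (s →₀ R) q i := by
      intro i
      exact (lTensor_exact (A i) hexact hl (eta A (s →₀ R) q i)).mp (h1 i)
    choose u hu using h2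
    obtain ⟨p, hp⟩ := hP.surjective u
    have h3 : eta A (s →₀ R) (f p) = eta A (s →₀ R) q := by
      funext i
      have := congrFun (congrArg (fun g => g p) hnatf) i
      change LinearMap.lTensor (A i) f (eta A (t →₀ R) p i) = eta A (s →₀ R) (f p) i at this
      rw [← this, hp, hu]
    have h4 : f p = q := hQ.injective h3
    rw [← h4]
    exact hexact.apply_apply_eq_zero p
  · -- surjectivity
    intro y
    have hFl : ∀ i, ∃ z : A i ⊗[R] (s →₀ R), LinearMap.lTensor (A i) l z = y i := by
      intro i
      exact LinearMap.lTensor_surjective (A i) hl (y i)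
    choose z hz using hFl
    obtain ⟨q, hq⟩ := hQ.surjective z
    refine ⟨l q, funext fun i => ?_⟩
    have := congrFun (congrArg (fun g => g q) hnatl) i
    change LinearMap.lTensor (A i) l (eta A (s →₀ R) q i) = eta A M (l q) i at this
    show (eta A M) (l q) i = y i
    rw [← this]
    have hq' := congrFun hq i
    rw [hq', hz]

end Main

/-- Let `(A i)_{i ∈ I}` be commutative rings, `A = ∏ i, A i`, and `M` a
finitely presented `A`-module. The natural map `M → ∏ i, (A i ⊗[A] M)`,
`m ↦ (1 ⊗ₜ m)_i`, is an isomorphism of `A`-modules (here it is asserted to be bijective,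
and it is `A`-linear by construction). -/
theorem stmt5 {I : Type} (A : I → Type) [∀ i, CommRing (A i)]
    (M : Type) [AddCommGroup M] [Module ((i : I) → A i) M]
    [Module.FinitePresentation ((i : I) → A i) M] :
    letI : ∀ i, Algebra ((j : I) → A j) (A i) := fun i => (Pi.evalRingHom A i).toAlgebra
    Function.Bijective
      (LinearMap.pi
        (fun i => (TensorProduct.mk ((j : I) → A j) (A i) M) 1) :
        M →ₗ[(i : I) → A i] ((i : I) → (A i ⊗[(j : I) → A j] M))) := by
  exact eta_bij A M
end

section
/- Let F be a field of characteristic ≠ 2 and h ∈ F* a nonzero element. If h is a sum of 3 squares in F, then −1 is a sum of 2 squares in the field (or étale algebra) F[√−h] = F[x]/(x² + h). -/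
/-- In any field, if `-1` is a sum of three squares, it is a sum of two squares. -/
lemma level3to2 {K : Type*} [Field K] {a b c : K} (h : a ^ 2 + b ^ 2 + c ^ 2 = -1) :
    ∃ u v : K, u ^ 2 + v ^ 2 = -1 := by
  by_cases hc : 1 + c ^ 2 = 0
  · exact ⟨c, 0, by linear_combination hc⟩
  · refine ⟨(a + b * c) / (1 + c ^ 2), (b - a * c) / (1 + c ^ 2), ?_⟩
    field_simp
    ring_nf
    linear_combination (1 + c ^ 2) * h

/-- Let `F` be a field of characteristic `≠ 2` and `h ∈ F*`. If `h` is a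
sum of 3 squares in `F`, then `−1` is a sum of 2 squares in `F[√−h] = F[x]/(x² + h)`. -/
theorem stmt6 {F : Type} [Field F] (h2 : (2 : F) ≠ 0) (h : F) (hh : h ≠ 0)
    (hsq : ∃ a b c : F, h = a ^ 2 + b ^ 2 + c ^ 2) :
    ∃ a b : AdjoinRoot (Polynomial.X ^ 2 + Polynomial.C h : Polynomial F),
      a ^ 2 + b ^ 2 = -1 := by
  obtain ⟨a, b, c, habc⟩ := hsq
  set p : Polynomial F := Polynomial.X ^ 2 + Polynomial.C h with hp
  by_cases hs : ∃ s : F, s ^ 2 = -h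
  · -- reducible case: work in F and push forward
    obtain ⟨s, hs⟩ := hs
    have hs0 : s ≠ 0 := by
      intro h0; rw [h0] at hs; simp at hs; exact hh hs
    have key : (a / s) ^ 2 + (b / s) ^ 2 + (c / s) ^ 2 = -1 := by
      field_simp
      linear_combination -habc + hs
    obtain ⟨u, v, huv⟩ := level3to2 key
    refine ⟨AdjoinRoot.of p u, AdjoinRoot.of p v, ?_⟩
    rw [← map_pow, ← map_pow, ← map_add, huv, map_neg, map_one]
  · -- irreducible case: AdjoinRoot p is a field
    have hmonic : p.Monic := by
      apply Polynomial.monic_X_pow_add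
      exact Polynomial.degree_C_le.trans_lt (by norm_num)
    have hdeg : p.natDegree = 2 := by
      rw [hp]
      compute_degree!
    have hirr : Irreducible p := by
      rw [Polynomial.irreducible_iff_roots_eq_zero_of_degree_le_three (by omega) (by omega)]
      rw [Multiset.eq_zero_iff_forall_notMem]
      intro t ht
      rw [Polynomial.mem_roots hmonic.ne_zero, Polynomial.IsRoot, hp] at ht
      simp at ht
      exact hs ⟨t, by linear_combination ht⟩
    haveI : Fact (Irreducible p) := ⟨hirr⟩
    set r : AdjoinRoot p := AdjoinRoot.root p with hr
    have hroot : r ^ 2 + AdjoinRoot.of p h = 0 := by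
      have := AdjoinRoot.eval₂_root p
      simpa [hp] using this
    have hh' : AdjoinRoot.of p h ≠ 0 := by
      simpa using (map_ne_zero (AdjoinRoot.of p)).mpr hh
    have hr0 : r ≠ 0 := by
      intro h0
      rw [h0] at hroot
      simp at hroot
      exact hh hroot
    have key : (AdjoinRoot.of p a / r) ^ 2 + (AdjoinRoot.of p b / r) ^ 2
        + (AdjoinRoot.of p c / r) ^ 2 = -1 := by
      have habc' : AdjoinRoot.of p h = AdjoinRoot.of p a ^ 2 + AdjoinRoot.of p b ^ 2
          + AdjoinRoot.of p c ^ 2 := by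
        rw [habc]; push_cast [map_add, map_pow]; ring
      field_simp
      linear_combination -habc' + hroot
    exact level3to2 key
end

section
/- Let F be a field of characteristic ≠ 2 and h ∈ F* such that −h is not a square in F. If −1 is a sum of 2 squares in the field F[√−h] = F[x]/(x² + h), then h is a sum of 3 squares in F. -/
open Polynomial

/-- Let `F` be a field of characteristic `≠ 2` and `h ∈ F*` such that `−h`
is not a square in `F`. If `−1` is a sum of 2 squares in the field
`F[√−h] = F[x]/(x² + h)`, then `h` is a sum of 3 squares in `F`. -/
theorem stmt7 {F : Type} [Field F] (h2 : (2 : F) ≠ 0) (h : F) (hh : h ≠ 0)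
    (hns : ∀ t : F, t ^ 2 ≠ -h)
    (hsum : ∃ a b : AdjoinRoot (Polynomial.X ^ 2 + Polynomial.C h : Polynomial F),
      a ^ 2 + b ^ 2 = -1) :
    ∃ a b c : F, h = a ^ 2 + b ^ 2 + c ^ 2 := by
  set f : Polynomial F := X ^ 2 + C h with hf
  obtain ⟨a, b, hab⟩ := hsum
  have hmonic : f.Monic := by
    simpa [hf] using monic_X_pow_add_C h (two_ne_zero)
  have hdeg : f.degree = 2 := by
    exact (degree_X_pow_add_C (by norm_num) h).trans (by norm_cast)
  have hroot : (AdjoinRoot.root f) ^ 2 = - (AdjoinRoot.of f) h := by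
    have hz := AdjoinRoot.mk_self (f := f)
    rw [hf, map_add, map_pow, AdjoinRoot.mk_X, AdjoinRoot.mk_C] at hz
    exact eq_neg_of_add_eq_zero_left hz
  have repr : ∀ z : AdjoinRoot f, ∃ c0 c1 : F,
      z = AdjoinRoot.of f c0 + AdjoinRoot.of f c1 * AdjoinRoot.root f := by
    intro z
    obtain ⟨p, hp⟩ := AdjoinRoot.mk_surjective z
    refine ⟨(p %ₘ f).coeff 0, (p %ₘ f).coeff 1, ?_⟩
    have h1 : AdjoinRoot.mk f (p %ₘ f) = z := by
      rw [modByMonic_eq_sub_mul_div p f, map_sub, map_mul, AdjoinRoot.mk_self,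
        zero_mul, sub_zero, hp]
    have hle : (p %ₘ f).degree ≤ 1 := by
      have := degree_modByMonic_lt p hmonic
      rw [hdeg] at this
      exact Order.le_of_lt_succ (by norm_cast at this ⊢)
    have h3 : p %ₘ f = C ((p %ₘ f).coeff 1) * X + C ((p %ₘ f).coeff 0) :=
      eq_X_add_C_of_degree_le_one hle
    calc z = AdjoinRoot.mk f (p %ₘ f) := h1.symm
      _ = AdjoinRoot.mk f (C ((p %ₘ f).coeff 1) * X + C ((p %ₘ f).coeff 0)) := by rw [← h3]
      _ = _ := by rw [map_add, map_mul, AdjoinRoot.mk_C, AdjoinRoot.mk_X, AdjoinRoot.mk_C]; ring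
  obtain ⟨a₀, a₁, ha⟩ := repr a
  obtain ⟨b₀, b₁, hb⟩ := repr b
  rw [ha, hb] at hab
  have hzero : AdjoinRoot.mk f (C (a₀^2 + b₀^2 - h*(a₁^2+b₁^2) + 1)
      + C (2*(a₀*a₁+b₀*b₁)) * X) = 0 := by
    rw [map_add, map_mul, AdjoinRoot.mk_C, AdjoinRoot.mk_C, AdjoinRoot.mk_X]
    simp only [map_add, map_sub, map_mul, map_pow, map_one, map_ofNat]
    linear_combination hab - ((AdjoinRoot.of f a₁)^2 + (AdjoinRoot.of f b₁)^2) * hroot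
  rw [AdjoinRoot.mk_eq_zero] at hzero
  have hpq : (C (a₀^2 + b₀^2 - h*(a₁^2+b₁^2) + 1) + C (2*(a₀*a₁+b₀*b₁)) * X : Polynomial F) = 0 := by
    refine eq_zero_of_dvd_of_degree_lt hzero (lt_of_le_of_lt (b := (1 : WithBot ℕ)) ?_ ?_)
    · rw [add_comm]
      exact degree_linear_le
    · rw [hdeg]
      norm_cast
  have h0 := congrArg (fun p => Polynomial.coeff p 0) hpq
  have h1 := congrArg (fun p => Polynomial.coeff p 1) hpq
  simp only [coeff_add, coeff_C_mul, coeff_C, coeff_X_zero, coeff_X_one, coeff_zero,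
    mul_zero, mul_one, add_zero, zero_add, if_true, ite_true, ite_false,
    Nat.one_ne_zero, if_false, reduceIte] at h0 h1
  have hA : a₀^2 + b₀^2 - h*(a₁^2+b₁^2) + 1 = 0 := h0
  have hB : a₀*a₁ + b₀*b₁ = 0 := by
    rcases mul_eq_zero.mp h1 with h' | h'
    · exact absurd h' h2
    · exact h'
  by_cases hs : a₁^2 + b₁^2 = 0
  · have hm1 : a₀^2 + b₀^2 = -1 := by linear_combination hA + h * hs
    refine ⟨(h+1)/2, a₀*(h-1)/2, b₀*(h-1)/2, ?_⟩
    have h4 : (4:F) ≠ 0 := by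
      have := mul_ne_zero h2 h2
      norm_num at this
      exact this
    field_simp
    linear_combination (-(h-1)^2) * hm1
  · have key : h * (a₁^2+b₁^2)^2 = a₁^2 + b₁^2 + (a₀*b₁ - b₀*a₁)^2 := by
      linear_combination (-(a₁^2+b₁^2)) * hA + (a₀*a₁+b₀*b₁) * hB
    refine ⟨a₁/(a₁^2+b₁^2), b₁/(a₁^2+b₁^2), (a₀*b₁-b₀*a₁)/(a₁^2+b₁^2), ?_⟩
    field_simp
    linear_combination key
end
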